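/- arXiv:1806.10038 — 10 statements merged into one kernel-verified Lean document; each statement's English description precedes it below -/
import Mathlib

section
/- Let (Ω,μ) and (Ω',ν) be measure spaces, ν finite, and let A, A^l, A^u : L¹(μ) → L^∞(ν) be continuous linear operators with A^l ≤ A ≤ A^u on the positive cone, i.e. A^l u ≤ A u ≤ A^u u for every u ∈ L¹(μ) with u ≥ 0. Let f, f^l, f^u ∈ L^∞(ν) and ε > 0 satisfy f^u − f ≥ ε·𝟙 and f − f^l ≥ ε·𝟙. Suppose there exists ū ∈ L¹(μ) with ū ≥ 0 and Aū = f. Then for every (ω₁, ω₂) ∈ L^∞(ν) × L^∞(ν) with ‖ω₁‖_∞ ≤ ε and ‖ω₂‖_∞ ≤ ε there exist u ∈ L¹(μ) with u ≥ 0 and k₁, k₂ ∈ L^∞(ν) with k₁ ≤ 0 and k₂ ≤ 0 such that ω₁ = A^l u − f^u − k₁ and ω₂ = f^l − A^u u − k₂; in particular, 0 belongs to the interior (in L^∞(ν) × L^∞(ν)) of the set {(A^l u − f^u − k₁, f^l − A^u u − k₂) : u ∈ L¹(μ), u ≥ 0, k₁ ≤ 0, k₂ ≤ 0} (Robinson regularity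 of the primal problem). -/
open MeasureTheory
open scoped ENNReal

lemma ae_abs_le_norm_of_Linfty {Ω' : Type*} [MeasurableSpace Ω'] {ν : Measure Ω'}
    (g : Lp ℝ ⊤ ν) : ∀ᵐ x ∂ν, |g x| ≤ ‖g‖ := by
  have h := MeasureTheory.ae_le_eLpNormEssSup (f := (g : Ω' → ℝ)) (μ := ν)
  have hne : eLpNormEssSup (g : Ω' → ℝ) ν ≠ ∞ := by
    have := Lp.eLpNorm_ne_top g
    rwa [eLpNorm_exponent_top] at this
  filter_upwards [h] with x hx
  have : (‖g x‖₊ : ℝ≥0∞).toReal ≤ (eLpNormEssSup (g : Ω' → ℝ) ν).toReal :=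
    ENNReal.toReal_mono hne hx
  simpa [Lp.norm_def, eLpNorm_exponent_top, Real.norm_eq_abs] using this

/-- Robinson regularity of the primal problem: if `A^l ≤ A ≤ A^u` on the
positive cone, `f^u - f ≥ ε·𝟙`, `f - f^l ≥ ε·𝟙` and there is `ū ≥ 0` with
`Aū = f`, then every pair `(ω₁, ω₂)` with `‖ω₁‖_∞ ≤ ε`, `‖ω₂‖_∞ ≤ ε` can be
written as `ω₁ = A^l u - f^u - k₁`, `ω₂ = f^l - A^u u - k₂` with `u ≥ 0`,
`k₁, k₂ ≤ 0`; in particular `0` is in the interior of the corresponding set. -/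
theorem robinson_regularity_primal
    {Ω Ω' : Type*} [MeasurableSpace Ω] [MeasurableSpace Ω']
    (μ : Measure Ω) (ν : Measure Ω') [IsFiniteMeasure ν]
    (A Al Au : Lp ℝ 1 μ →L[ℝ] Lp ℝ ⊤ ν)
    (hAl : ∀ u : Lp ℝ 1 μ, 0 ≤ u → Al u ≤ A u)
    (hAu : ∀ u : Lp ℝ 1 μ, 0 ≤ u → A u ≤ Au u)
    (f fl fu : Lp ℝ ⊤ ν) (ε : ℝ) (hε : 0 < ε)
    (one : Lp ℝ ⊤ ν) (hone : (one : Ω' → ℝ) =ᵐ[ν] fun _ => (1 : ℝ))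
    (hfu : ε • one ≤ fu - f) (hfl : ε • one ≤ f - fl)
    (ubar : Lp ℝ 1 μ) (hubar : 0 ≤ ubar) (hAubar : A ubar = f) :
    (∀ ω₁ ω₂ : Lp ℝ ⊤ ν, ‖ω₁‖ ≤ ε → ‖ω₂‖ ≤ ε →
      ∃ (u : Lp ℝ 1 μ) (k₁ k₂ : Lp ℝ ⊤ ν), 0 ≤ u ∧ k₁ ≤ 0 ∧ k₂ ≤ 0 ∧
        ω₁ = Al u - fu - k₁ ∧ ω₂ = fl - Au u - k₂) ∧
    ((0, 0) : Lp ℝ ⊤ ν × Lp ℝ ⊤ ν) ∈ interior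
      {w : Lp ℝ ⊤ ν × Lp ℝ ⊤ ν |
        ∃ (u : Lp ℝ 1 μ) (k₁ k₂ : Lp ℝ ⊤ ν), 0 ≤ u ∧ k₁ ≤ 0 ∧ k₂ ≤ 0 ∧
          w.1 = Al u - fu - k₁ ∧ w.2 = fl - Au u - k₂} := by
  have key : ∀ ω₁ ω₂ : Lp ℝ ⊤ ν, ‖ω₁‖ ≤ ε → ‖ω₂‖ ≤ ε →
      ∃ (u : Lp ℝ 1 μ) (k₁ k₂ : Lp ℝ ⊤ ν), 0 ≤ u ∧ k₁ ≤ 0 ∧ k₂ ≤ 0 ∧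
        ω₁ = Al u - fu - k₁ ∧ ω₂ = fl - Au u - k₂ := by
    intro ω₁ ω₂ h₁ h₂
    refine ⟨ubar, Al ubar - fu - ω₁, fl - Au ubar - ω₂, hubar, ?_, ?_, (sub_sub_cancel _ _).symm, (sub_sub_cancel _ _).symm⟩
    · -- Al ubar - fu - ω₁ ≤ 0
      rw [← Lp.coeFn_le]
      have hle : Al ubar ≤ f := hAubar ▸ hAl ubar hubar
      rw [← Lp.coeFn_le] at hle hfu
      filter_upwards [hle, hfu, hone, ae_abs_le_norm_of_Linfty ω₁,
        Lp.coeFn_sub (Al ubar - fu) ω₁, Lp.coeFn_sub (Al ubar) fu,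
        Lp.coeFn_sub fu f, Lp.coeFn_smul ε one, Lp.coeFn_zero ℝ ⊤ ν]
        with x h1 h2 h3 h4 h5 h6 h7 h8 h9
      simp only [Pi.sub_apply] at h5 h6 h7
      simp only [Pi.smul_apply, smul_eq_mul] at h8
      simp only [Pi.zero_apply] at h9
      have h2' : ε * 1 ≤ fu x - f x := by
        have := h2; rw [h8, h7] at this; simpa [h3] using this
      have h4' : |ω₁ x| ≤ ε := le_trans h4 h₁
      rw [h5, h6, h9]
      nlinarith [h1, abs_le.mp h4']
    · -- fl - Au ubar - ω₂ ≤ 0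
      rw [← Lp.coeFn_le]
      have hle : f ≤ Au ubar := hAubar ▸ hAu ubar hubar
      rw [← Lp.coeFn_le] at hle hfl
      filter_upwards [hle, hfl, hone, ae_abs_le_norm_of_Linfty ω₂,
        Lp.coeFn_sub (fl - Au ubar) ω₂, Lp.coeFn_sub fl (Au ubar),
        Lp.coeFn_sub f fl, Lp.coeFn_smul ε one, Lp.coeFn_zero ℝ ⊤ ν]
        with x h1 h2 h3 h4 h5 h6 h7 h8 h9
      simp only [Pi.sub_apply] at h5 h6 h7
      simp only [Pi.smul_apply, smul_eq_mul] at h8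
      simp only [Pi.zero_apply] at h9
      have h2' : ε * 1 ≤ f x - fl x := by
        have := h2; rw [h8, h7] at this; simpa [h3] using this
      have h4' : |ω₂ x| ≤ ε := le_trans h4 h₂
      rw [h5, h6, h9]
      nlinarith [h1, abs_le.mp h4']
  refine ⟨key, ?_⟩
  rw [mem_interior]
  refine ⟨Metric.ball (0, 0) ε, ?_, Metric.isOpen_ball, Metric.mem_ball_self hε⟩
  rintro ⟨w₁, w₂⟩ hw
  rw [Metric.mem_ball, Prod.dist_eq] at hw
  simp only [dist_zero_right] at hw
  exact key w₁ w₂ (le_of_lt (lt_of_le_of_lt (le_max_left _ _) hw))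
    (le_of_lt (lt_of_le_of_lt (le_max_right _ _) hw))
end

section
/- Let (Ω,μ) and (Ω',ν) be measure spaces, let J : L¹(μ) → [0,∞] be convex and absolutely one-homogeneous, let B : L¹(μ) → L^∞(ν) be a continuous linear operator, and let φ ∈ L^∞(ν). Suppose ũ ∈ L¹(μ) is primal feasible: ũ ≥ 0 and Bũ ≤ φ; suppose λ̃ ∈ L^∞(μ) with λ̃ ≥ 0 and μ̃ a positive continuous linear functional on L^∞(ν) are dual feasible: ⟨λ̃, v⟩ − μ̃(Bv) ≤ J(v) for all v ∈ L¹(μ); and suppose strong duality holds: J(ũ) = −μ̃(φ). Then the complementarity conditions μ̃(Bũ − φ) = 0 and ⟨λ̃, ũ⟩ = 0 hold, and moreover ⟨λ̃, ũ⟩ − μ̃(Bũ) = J(ũ), i.e. λ̃ − B*μ̃ is a subgradient of J at ũ. -/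
open MeasureTheory
open scoped ENNReal

/-- If `ũ` is primal feasible (`ũ ≥ 0`, `Bũ ≤ φ`), `(λ̃, μ̃)` is dual feasible
(`⟨λ̃,v⟩ - μ̃(Bv) ≤ J v` for all `v`) and strong duality `J ũ = -μ̃(φ)` holds,
then the complementarity conditions `μ̃(Bũ - φ) = 0` and `⟨λ̃, ũ⟩ = 0` hold
and `⟨λ̃, ũ⟩ - μ̃(Bũ) = J ũ`, i.e. `λ̃ - B*μ̃` is a subgradient of `J` at `ũ`. -/
theorem complementarity_of_strong_duality
    {Ω Ω' : Type*} [MeasurableSpace Ω] [MeasurableSpace Ω']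
    (μ : Measure Ω) (ν : Measure Ω')
    (J : Lp ℝ 1 μ → ℝ≥0∞)
    (hconv : ∀ u v : Lp ℝ 1 μ, ∀ t : ℝ, 0 ≤ t → t ≤ 1 →
      J (t • u + (1 - t) • v) ≤ ENNReal.ofReal t * J u + ENNReal.ofReal (1 - t) * J v)
    (hzero : J 0 = 0)
    (hhom : ∀ (s : ℝ) (u : Lp ℝ 1 μ), J (s • u) = ENNReal.ofReal |s| * J u)
    (B : Lp ℝ 1 μ →L[ℝ] Lp ℝ ⊤ ν) (φ : Lp ℝ ⊤ ν)
    (ut : Lp ℝ 1 μ) (hut : 0 ≤ ut) (hfeas : B ut ≤ φ)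
    (lt : Lp ℝ ⊤ μ) (hlt : 0 ≤ lt)
    (mt : Lp ℝ ⊤ ν →L[ℝ] ℝ) (hmt : ∀ ψ : Lp ℝ ⊤ ν, 0 ≤ ψ → 0 ≤ mt ψ)
    (hdualfeas : ∀ v : Lp ℝ 1 μ,
      ((∫ x, lt x * v x ∂μ - mt (B v) : ℝ) : EReal) ≤ (J v : EReal))
    (hstrong : (J ut : EReal) = ((-(mt φ) : ℝ) : EReal)) :
    mt (B ut - φ) = 0 ∧ (∫ x, lt x * ut x ∂μ) = 0 ∧
    (J ut : EReal) = ((∫ x, lt x * ut x ∂μ - mt (B ut) : ℝ) : EReal) := by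
  -- mt (B ut - φ) ≤ 0
  have h1 : mt (B ut - φ) ≤ 0 := by
    have h := hmt (φ - B ut) (by simpa [sub_nonneg] using hfeas)
    have : mt (φ - B ut) = -(mt (B ut - φ)) := by
      rw [map_sub, map_sub]; ring
    linarith [this ▸ h]
  -- integral nonneg
  have h2 : 0 ≤ ∫ x, lt x * ut x ∂μ := by
    apply integral_nonneg_of_ae
    filter_upwards [(Lp.coeFn_nonneg lt).2 hlt, (Lp.coeFn_nonneg ut).2 hut] with x hx hx'
    exact mul_nonneg hx hx'
  -- dual feasibility at ut + strong duality
  have h3 : (∫ x, lt x * ut x ∂μ) - mt (B ut) ≤ -(mt φ) := by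
    have := (hdualfeas ut).trans_eq hstrong
    exact_mod_cast this
  have h4 : (∫ x, lt x * ut x ∂μ) ≤ mt (B ut - φ) := by
    rw [map_sub]; linarith
  have hint : (∫ x, lt x * ut x ∂μ) = 0 := le_antisymm (h4.trans h1) h2
  have hcomp : mt (B ut - φ) = 0 := le_antisymm h1 (hint ▸ h4)
  refine ⟨hcomp, hint, ?_⟩
  have hBφ : mt (B ut) = mt φ := by
    have := hcomp; rw [map_sub] at this; linarith
  rw [hstrong, hint, hBφ]
  norm_num
end

section
/- Let (Ω,μ) and (Ω',ν) be measure spaces, let J : L¹(μ) → [0,∞] be convex and absolutely one-homogeneous, let A : L¹(μ) → L^∞(ν) be a continuous linear operator, and let ū ∈ L¹(μ) satisfy ū ≥ 0 and Aū = f for some f ∈ L^∞(ν). Assume the source condition: there exist positive continuous linear functionals μ̄₁, μ̄₂ on L^∞(ν) such that μ̄₂(Av) − μ̄₁(Av) ≤ J(v) for all v ∈ L¹(μ) and μ̄₂(Aū) − μ̄₁(Aū) = J(ū). Then: (a) μ̄₂(f) − μ̄₁(f) = J(ū); and (b) for every λ ∈ L^∞(μ) with λ ≥ 0 and all positive continuous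 linear functionals μ₁, μ₂ on L^∞(ν) satisfying ⟨λ, v⟩ − μ₁(Av) + μ₂(Av) ≤ J(v) for all v ∈ L¹(μ), one has μ₂(f) − μ₁(f) ≤ J(ū). That is, the pair (0, μ̄) solves the dual limit problem and strong duality holds. -/
open MeasureTheory
open scoped ENNReal

/-- Under the source condition (existence of positive functionals `μ̄₁, μ̄₂` on
`L^∞(ν)` with `μ̄₂(Av) - μ̄₁(Av) ≤ J v` for all `v` and equality at the
`J`-minimising solution `ū`), the pair `(0, μ̄)` solves the dual limit problem
and strong duality holds: `μ̄₂(f) - μ̄₁(f) = J ū`, and every dual feasible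
`(λ, μ₁, μ₂)` has objective value `μ₂(f) - μ₁(f) ≤ J ū`. -/
theorem source_condition_solves_dual_limit
    {Ω Ω' : Type*} [MeasurableSpace Ω] [MeasurableSpace Ω']
    (μ : Measure Ω) (ν : Measure Ω')
    (J : Lp ℝ 1 μ → ℝ≥0∞)
    (hconv : ∀ u v : Lp ℝ 1 μ, ∀ t : ℝ, 0 ≤ t → t ≤ 1 →
      J (t • u + (1 - t) • v) ≤ ENNReal.ofReal t * J u + ENNReal.ofReal (1 - t) * J v)
    (hzero : J 0 = 0)
    (hhom : ∀ (s : ℝ) (u : Lp ℝ 1 μ), J (s • u) = ENNReal.ofReal |s| * J u)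
    (A : Lp ℝ 1 μ →L[ℝ] Lp ℝ ⊤ ν)
    (ubar : Lp ℝ 1 μ) (hubar : 0 ≤ ubar)
    (f : Lp ℝ ⊤ ν) (hAubar : A ubar = f)
    (mb₁ mb₂ : Lp ℝ ⊤ ν →L[ℝ] ℝ)
    (hmb₁ : ∀ ψ : Lp ℝ ⊤ ν, 0 ≤ ψ → 0 ≤ mb₁ ψ)
    (hmb₂ : ∀ ψ : Lp ℝ ⊤ ν, 0 ≤ ψ → 0 ≤ mb₂ ψ)
    (hsc : ∀ v : Lp ℝ 1 μ, ((mb₂ (A v) - mb₁ (A v) : ℝ) : EReal) ≤ (J v : EReal))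
    (hsceq : (J ubar : EReal) = ((mb₂ (A ubar) - mb₁ (A ubar) : ℝ) : EReal)) :
    (J ubar : EReal) = ((mb₂ f - mb₁ f : ℝ) : EReal) ∧
    (∀ lam : Lp ℝ ⊤ μ, 0 ≤ lam →
      ∀ m₁ m₂ : Lp ℝ ⊤ ν →L[ℝ] ℝ,
        (∀ ψ : Lp ℝ ⊤ ν, 0 ≤ ψ → 0 ≤ m₁ ψ) →
        (∀ ψ : Lp ℝ ⊤ ν, 0 ≤ ψ → 0 ≤ m₂ ψ) →
        (∀ v : Lp ℝ 1 μ,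
          ((∫ x, lam x * v x ∂μ - m₁ (A v) + m₂ (A v) : ℝ) : EReal) ≤ (J v : EReal)) →
        ((m₂ f - m₁ f : ℝ) : EReal) ≤ (J ubar : EReal)) := by
  constructor
  · rw [hsceq, hAubar]
  · intro lam hlam m₁ m₂ hm₁ hm₂ hfeas
    have hkey := hfeas ubar
    rw [hAubar] at hkey
    have hint : 0 ≤ ∫ x, lam x * ubar x ∂μ := by
      apply integral_nonneg_of_ae
      have h1 : (0 : Ω → ℝ) ≤ᵐ[μ] lam := (Lp.coeFn_nonneg lam).mpr hlam
      have h2 : (0 : Ω → ℝ) ≤ᵐ[μ] ubar := (Lp.coeFn_nonneg ubar).mpr hubar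
      filter_upwards [h1, h2] with x hx1 hx2
      exact mul_nonneg hx1 hx2
    calc ((m₂ f - m₁ f : ℝ) : EReal)
        ≤ ((∫ x, lam x * ubar x ∂μ - m₁ f + m₂ f : ℝ) : EReal) := by
          apply EReal.coe_le_coe_iff.mpr; linarith
      _ ≤ (J ubar : EReal) := hkey
end

section
/- Let (Ω',ν) be a measure space, let φ_n, φ̄ ∈ L^∞(ν), let ε_n > 0 and C₀ ≥ 1 satisfy ε_n·𝟙 ≤ φ_n − φ̄ ≤ C₀·ε_n·𝟙, and let μ_n and μ̄ be positive continuous linear functionals on L^∞(ν) satisfying the mutual optimality inequalities μ̄(−φ_n) ≤ μ_n(−φ_n) and μ_n(−φ̄) ≤ μ̄(−φ̄). Then μ_n(𝟙) ≤ C₀·μ̄(𝟙). (Since for a positive functional μ* on L^∞(ν) one has ‖μ*‖ = μ*(𝟙), this is the bound ‖μ_n‖ ≤ C₀‖μ̄‖ on the dual variables in the case of an exact operator.) -/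
open MeasureTheory
open scoped ENNReal

/-- Boundedness of the dual variables in the exact-operator case: if
`ε_n·𝟙 ≤ φ_n - φ̄ ≤ C₀·ε_n·𝟙` and the positive functionals `μ_n, μ̄` satisfy
the mutual optimality inequalities `μ̄(-φ_n) ≤ μ_n(-φ_n)` and
`μ_n(-φ̄) ≤ μ̄(-φ̄)`, then `μ_n(𝟙) ≤ C₀·μ̄(𝟙)`. -/
theorem dual_variable_bound_exact_operator
    {Ω' : Type*} [MeasurableSpace Ω'] (ν : Measure Ω')
    (one : Lp ℝ ⊤ ν) (hone : (one : Ω' → ℝ) =ᵐ[ν] fun _ => (1 : ℝ))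
    (φn φb : Lp ℝ ⊤ ν) (εn C₀ : ℝ) (hεn : 0 < εn) (hC₀ : 1 ≤ C₀)
    (hlow : εn • one ≤ φn - φb) (hup : φn - φb ≤ (C₀ * εn) • one)
    (μn μb : Lp ℝ ⊤ ν →L[ℝ] ℝ)
    (hμn : ∀ ψ : Lp ℝ ⊤ ν, 0 ≤ ψ → 0 ≤ μn ψ)
    (hμb : ∀ ψ : Lp ℝ ⊤ ν, 0 ≤ ψ → 0 ≤ μb ψ)
    (h1 : μb (-φn) ≤ μn (-φn))
    (h2 : μn (-φb) ≤ μb (-φb)) :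
    μn one ≤ C₀ * μb one := by
  have hA : 0 ≤ μn ((φn - φb) - εn • one) := hμn _ (sub_nonneg.2 hlow)
  have hB : 0 ≤ μb ((C₀ * εn) • one - (φn - φb)) := hμb _ (sub_nonneg.2 hup)
  simp only [map_sub, _root_.map_smul, smul_eq_mul] at hA hB
  have hφn : μn φn ≤ μb φn := by
    simp only [map_neg] at h1; linarith
  have hφb : μb φb ≤ μn φb := by
    simp only [map_neg] at h2; linarith
  have key : εn * μn one ≤ C₀ * εn * μb one := by linarith
  have := (mul_le_mul_iff_right₀ hεn).mp (by linarith : εn * μn one ≤ εn * (C₀ * μb one))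
  exact this
end

section
/- Let (Ω,μ) be a finite measure space and (Ω',ν) a measure space. Let J : L¹(μ) → [0,∞] satisfy J(𝟙_Ω) < ∞ where 𝟙_Ω ∈ L¹(μ) is the constant function 1. Let B, B̄ : L¹(μ) → L^∞(ν) be continuous linear operators with B u ≤ B̄ u for every u ∈ L¹(μ) with u ≥ 0. Let λ ∈ L^∞(μ) with λ ≥ 0 and let μ* be a positive continuous linear functional on L^∞(ν), satisfying the dual feasibility condition ⟨λ, v⟩ − μ*(Bv) ≤ J(v) for all v ∈ L¹(μ). Then ∫ λ dμ ≤ J(𝟙_Ω) + ‖B̄𝟙_Ω‖_∞ · μ*(𝟙), i.e. the L¹ norm of λ is bounded by J(𝟙_Ω) + ‖μ*‖·‖B̄𝟙_Ω‖_∞. -/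
open MeasureTheory
open scoped ENNReal

/-- Boundedness of the Lagrange multiplier `λ`: if `J(𝟙_Ω) < ∞`, `B ≤ B̄` on
the positive cone, `λ ≥ 0` in `L^∞(μ)` and `μ*` is a positive functional on
`L^∞(ν)` with `⟨λ,v⟩ - μ*(Bv) ≤ J v` for all `v`, then
`∫ λ dμ ≤ J(𝟙_Ω) + ‖B̄𝟙_Ω‖_∞ · μ*(𝟙)`. -/
theorem lagrange_multiplier_lambda_bound
    {Ω Ω' : Type*} [MeasurableSpace Ω] [MeasurableSpace Ω']
    (μ : Measure Ω) [IsFiniteMeasure μ] (ν : Measure Ω')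
    (J : Lp ℝ 1 μ → ℝ≥0∞)
    (oneΩ : Lp ℝ 1 μ) (honeΩ : (oneΩ : Ω → ℝ) =ᵐ[μ] fun _ => (1 : ℝ))
    (oneν : Lp ℝ ⊤ ν) (honeν : (oneν : Ω' → ℝ) =ᵐ[ν] fun _ => (1 : ℝ))
    (hJ1 : J oneΩ < ⊤)
    (B Bb : Lp ℝ 1 μ →L[ℝ] Lp ℝ ⊤ ν)
    (hBB : ∀ u : Lp ℝ 1 μ, 0 ≤ u → B u ≤ Bb u)
    (lam : Lp ℝ ⊤ μ) (hlam : 0 ≤ lam)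
    (ms : Lp ℝ ⊤ ν →L[ℝ] ℝ) (hms : ∀ ψ : Lp ℝ ⊤ ν, 0 ≤ ψ → 0 ≤ ms ψ)
    (hfeas : ∀ v : Lp ℝ 1 μ,
      ((∫ x, lam x * v x ∂μ - ms (B v) : ℝ) : EReal) ≤ (J v : EReal)) :
    ((∫ x, lam x ∂μ : ℝ) : EReal) ≤
      (J oneΩ : EReal) + ((‖Bb oneΩ‖ * ms oneν : ℝ) : EReal) := by

  -- `c` is the finite value of `J oneΩ`
  set c : ℝ := (J oneΩ).toReal with hc
  have hJc : (J oneΩ : EReal) = ((c : ℝ) : EReal) := by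
    rw [hc, ← EReal.toReal_coe_ennreal,
      EReal.coe_toReal (by simp [hJ1.ne]) (EReal.coe_ennreal_ne_bot _)]
  -- integral of lam * oneΩ equals integral of lam
  have hint : (∫ x, lam x * oneΩ x ∂μ) = ∫ x, lam x ∂μ := by
    refine integral_congr_ae ?_
    filter_upwards [honeΩ] with x hx
    simp [hx]
  -- oneΩ ≥ 0
  have honeΩpos : (0 : Lp ℝ 1 μ) ≤ oneΩ := by
    rw [← MeasureTheory.Lp.coeFn_nonneg]
    filter_upwards [honeΩ] with x hx
    simp [hx]
  -- B oneΩ ≤ Bb oneΩ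
  have h1 : B oneΩ ≤ Bb oneΩ := hBB oneΩ honeΩpos
  -- Bb oneΩ ≤ ‖Bb oneΩ‖ • oneν
  have h2 : Bb oneΩ ≤ ‖Bb oneΩ‖ • oneν := by
    rw [← MeasureTheory.Lp.coeFn_le]
    have hb : ∀ᵐ x ∂ν, ‖(Bb oneΩ : Ω' → ℝ) x‖₊ ≤ eLpNormEssSup (Bb oneΩ) ν :=
      MeasureTheory.ae_le_eLpNormEssSup
    filter_upwards [hb, MeasureTheory.Lp.coeFn_smul (‖Bb oneΩ‖) oneν, honeν]
      with x hx hsx h1x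
    rw [hsx]
    simp only [Pi.smul_apply, h1x, smul_eq_mul, mul_one]
    have hfin : eLpNormEssSup (Bb oneΩ) ν ≠ ⊤ := by
      have := MeasureTheory.Lp.eLpNorm_ne_top (Bb oneΩ)
      rwa [MeasureTheory.eLpNorm_exponent_top] at this
    have : ‖(Bb oneΩ : Ω' → ℝ) x‖ ≤ ‖Bb oneΩ‖ := by
      rw [MeasureTheory.Lp.norm_def, MeasureTheory.eLpNorm_exponent_top]
      have := ENNReal.toReal_mono hfin hx
      simpa using this
    exact le_trans (le_abs_self _) this
  -- positivity of ms differences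
  have hms1 : ms (B oneΩ) ≤ ms (Bb oneΩ) := by
    have := hms (Bb oneΩ - B oneΩ) (by rwa [sub_nonneg])
    rw [map_sub] at this
    linarith
  have hms2 : ms (Bb oneΩ) ≤ ‖Bb oneΩ‖ * ms oneν := by
    have := hms (‖Bb oneΩ‖ • oneν - Bb oneΩ) (by rwa [sub_nonneg])
    rw [map_sub, ContinuousLinearMap.map_smul] at this
    simp only [smul_eq_mul] at this
    linarith
  -- feasibility at oneΩ
  have hfe := hfeas oneΩ
  rw [hJc] at hfe ⊢
  rw [hint] at hfe
  rw [← EReal.coe_add]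
  rw [EReal.coe_le_coe_iff] at hfe ⊢
  linarith
end

section
/- Let (Ω,μ) and (Ω',ν) be measure spaces with ν(Ω') > 0, and let ε_n, η_n > 0, C₀ ≥ 1, D₀, M ≥ 0 with η_n ≤ D₀·ε_n. Let B_n, B̄ : L¹(μ) → L^∞(ν) be continuous linear operators with ‖B̄ − B_n‖ ≤ η_n, and let φ_n, φ̄ ∈ L^∞(ν) with φ_n − φ̄ ≤ C₀·ε_n·𝟙. Let u_n, ū ∈ L¹(μ) satisfy u_n ≥ 0, ū ≥ 0, ‖u_n‖₁ ≤ M, B_n u_n ≤ φ_n, B_n ū ≤ φ_n, and B̄ ū = φ̄. Let λ_n ∈ L^∞(μ) with λ_n ≥ 0 and ⟨λ_n, u_n⟩ = 0; let μ_n and μ̂ be positive continuous linear functionals on L^∞(ν) with μ_n(φ_n − B_n u_n) = 0; and let ℓ̂ be a continuous linear functional on L¹(μ) with ℓ̂(u_n) ≥ 0 and ℓ̂(ū) = 0. Then ⟨λ_n, u_n − ū⟩ − μ_n(B_n(u_n − ū)) − ℓ̂(u_n − ū) + μ̂(B̄(u_n − ū)) ≤ (C₀·μ̂(𝟙) + D₀·M·‖μ̂‖)·ε_n.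 (The left-hand side is the symmetric Bregman distance D_J^{symm}(ū, u_n) between the subgradients p_n = λ_n − B_n*μ_n ∈ ∂J(u_n) and p̂ = ℓ̂ − B̄*μ̂ ∈ ∂J(ū), so this is the convergence-rate estimate D_J^{symm}(ū, u_n) = O(ε_n).) -/
open MeasureTheory
open scoped ENNReal

private lemma linf_ae_bound {Ω : Type*} [MeasurableSpace Ω] {μ : Measure Ω}
    (f : Lp ℝ ⊤ μ) : ∀ᵐ x ∂μ, ‖(f : Ω → ℝ) x‖ ≤ ‖f‖ := by
  have h := enorm_ae_le_eLpNormEssSup (f : Ω → ℝ) μ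
  have hfin : eLpNorm (f : Ω → ℝ) ⊤ μ < ⊤ := Lp.eLpNorm_lt_top f
  rw [eLpNorm_exponent_top] at hfin
  filter_upwards [h] with x hx
  have : ((‖(f : Ω → ℝ) x‖₊ : ℝ≥0∞)).toReal ≤ (eLpNormEssSup (f : Ω → ℝ) μ).toReal :=
    ENNReal.toReal_mono hfin.ne hx
  simpa [Lp.norm_def, eLpNorm_exponent_top] using this

/-- Convergence-rate estimate for the symmetric Bregman distance: under the
complementarity conditions and the data/operator error bounds, the symmetric
Bregman distance
`⟨λ_n, u_n - ū⟩ - μ_n(B_n(u_n - ū)) - ℓ̂(u_n - ū) + μ̂(B̄(u_n - ū))`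
is bounded by `(C₀·μ̂(𝟙) + D₀·M·‖μ̂‖)·ε_n`. -/
theorem symmetric_bregman_distance_rate
    {Ω Ω' : Type*} [MeasurableSpace Ω] [MeasurableSpace Ω']
    (μ : Measure Ω) (ν : Measure Ω') (hν : 0 < ν Set.univ)
    (one : Lp ℝ ⊤ ν) (hone : (one : Ω' → ℝ) =ᵐ[ν] fun _ => (1 : ℝ))
    (εn ηn C₀ D₀ M : ℝ) (hεn : 0 < εn) (hηn : 0 < ηn) (hC₀ : 1 ≤ C₀)
    (hD₀ : 0 ≤ D₀) (hM : 0 ≤ M) (hηε : ηn ≤ D₀ * εn)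
    (Bn Bb : Lp ℝ 1 μ →L[ℝ] Lp ℝ ⊤ ν) (hBclose : ‖Bb - Bn‖ ≤ ηn)
    (φn φb : Lp ℝ ⊤ ν) (hφ : φn - φb ≤ (C₀ * εn) • one)
    (un ubar : Lp ℝ 1 μ) (hun : 0 ≤ un) (hubar : 0 ≤ ubar)
    (hunM : ‖un‖ ≤ M)
    (hfeasn : Bn un ≤ φn) (hfeasb : Bn ubar ≤ φn) (hexact : Bb ubar = φb)
    (lamn : Lp ℝ ⊤ μ) (hlamn : 0 ≤ lamn)
    (hcompl1 : ∫ x, lamn x * un x ∂μ = 0)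
    (μn μhat : Lp ℝ ⊤ ν →L[ℝ] ℝ)
    (hμn : ∀ ψ : Lp ℝ ⊤ ν, 0 ≤ ψ → 0 ≤ μn ψ)
    (hμhat : ∀ ψ : Lp ℝ ⊤ ν, 0 ≤ ψ → 0 ≤ μhat ψ)
    (hcompl2 : μn (φn - Bn un) = 0)
    (lhat : Lp ℝ 1 μ →L[ℝ] ℝ) (hlhat1 : 0 ≤ lhat un) (hlhat2 : lhat ubar = 0) :
    (∫ x, lamn x * (un - ubar) x ∂μ) - μn (Bn (un - ubar))
        - lhat (un - ubar) + μhat (Bb (un - ubar))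
      ≤ (C₀ * μhat one + D₀ * M * ‖μhat‖) * εn := by
  -- monotonicity of positive functionals
  have hμn_mono : ∀ a b : Lp ℝ ⊤ ν, a ≤ b → μn a ≤ μn b := by
    intro a b hab
    have := hμn (b - a) (sub_nonneg.2 hab)
    simpa [map_sub] using this
  have hμhat_mono : ∀ a b : Lp ℝ ⊤ ν, a ≤ b → μhat a ≤ μhat b := by
    intro a b hab
    have := hμhat (b - a) (sub_nonneg.2 hab)
    simpa [map_sub] using this
  -- Step A: the integral term
  have hlam_ae : 0 ≤ᵐ[μ] (lamn : Ω → ℝ) := (Lp.coeFn_nonneg _).2 hlamn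
  have hun_ae : 0 ≤ᵐ[μ] (un : Ω → ℝ) := (Lp.coeFn_nonneg _).2 hun
  have hubar_ae : 0 ≤ᵐ[μ] (ubar : Ω → ℝ) := (Lp.coeFn_nonneg _).2 hubar
  have hint : ∀ v : Lp ℝ 1 μ, Integrable (fun x => lamn x * v x) μ := by
    intro v
    exact (memLp_one_iff_integrable.1 (Lp.memLp v)).bdd_mul
      (Lp.aestronglyMeasurable lamn) (linf_ae_bound lamn)
  have hA : (∫ x, lamn x * (un - ubar) x ∂μ)
      = (∫ x, lamn x * un x ∂μ) - ∫ x, lamn x * ubar x ∂μ := by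
    rw [← integral_sub (hint un) (hint ubar)]
    refine integral_congr_ae ?_
    filter_upwards [Lp.coeFn_sub un ubar] with x hx
    rw [hx]
    simp [mul_sub]
  have hA2 : (0:ℝ) ≤ ∫ x, lamn x * ubar x ∂μ := by
    refine integral_nonneg_of_ae ?_
    filter_upwards [hlam_ae, hubar_ae] with x h1 h2
    exact mul_nonneg h1 h2
  have hAle : (∫ x, lamn x * (un - ubar) x ∂μ) ≤ 0 := by
    rw [hA, hcompl1]; linarith
  -- Step B: the μn term
  have hB : μn (Bn un) = μn φn := by
    have := hcompl2
    rw [map_sub] at this; linarith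
  have hBle : 0 ≤ μn (Bn (un - ubar)) := by
    have h1 : μn (Bn ubar) ≤ μn φn := hμn_mono _ _ hfeasb
    have : μn (Bn (un - ubar)) = μn (Bn un) - μn (Bn ubar) := by
      rw [map_sub, map_sub]
    rw [this, hB]; linarith
  -- Step C: the lhat term
  have hCle : 0 ≤ lhat (un - ubar) := by
    rw [map_sub, hlhat2]; linarith
  -- Step D: the μhat term
  have hD1 : μhat (Bn un) ≤ μhat φn := hμhat_mono _ _ hfeasn
  have hD2 : μhat (φn - φb) ≤ C₀ * εn * μhat one := by
    have := hμhat_mono _ _ hφ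
    simpa [_root_.map_smul] using this
  have hnorm1 : ‖(Bb - Bn) un‖ ≤ ηn * M := by
    calc ‖(Bb - Bn) un‖ ≤ ‖Bb - Bn‖ * ‖un‖ := (Bb - Bn).le_opNorm un
      _ ≤ ηn * M := mul_le_mul hBclose hunM (norm_nonneg _) hηn.le
  have hD3 : μhat ((Bb - Bn) un) ≤ ‖μhat‖ * (ηn * M) := by
    calc μhat ((Bb - Bn) un) ≤ ‖μhat ((Bb - Bn) un)‖ := le_abs_self _
      _ ≤ ‖μhat‖ * ‖(Bb - Bn) un‖ := μhat.le_opNorm _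
      _ ≤ ‖μhat‖ * (ηn * M) := by
          exact mul_le_mul_of_nonneg_left hnorm1 (norm_nonneg _)
  have hDeq : μhat (Bb (un - ubar))
      = μhat (Bn un) - μhat φn + μhat (φn - φb) + μhat ((Bb - Bn) un) := by
    rw [map_sub, hexact]
    have : (Bb : Lp ℝ 1 μ →L[ℝ] Lp ℝ ⊤ ν) un = Bn un + (Bb - Bn) un := by
      simp
    rw [this]
    simp only [map_sub, map_add]
    ring
  have hDle : μhat (Bb (un - ubar))
      ≤ C₀ * εn * μhat one + ‖μhat‖ * (ηn * M) := by
    rw [hDeq]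
    have h0 : μhat (Bn un) - μhat φn ≤ 0 := by linarith
    linarith
  -- combine
  have hη2 : ‖μhat‖ * (ηn * M) ≤ ‖μhat‖ * (D₀ * εn * M) := by
    have : ηn * M ≤ D₀ * εn * M := mul_le_mul_of_nonneg_right hηε hM
    exact mul_le_mul_of_nonneg_left this (norm_nonneg _)
  have : (∫ x, lamn x * (un - ubar) x ∂μ) - μn (Bn (un - ubar))
        - lhat (un - ubar) + μhat (Bb (un - ubar))
      ≤ C₀ * εn * μhat one + ‖μhat‖ * (D₀ * εn * M) := by linarith
  calc _ ≤ C₀ * εn * μhat one + ‖μhat‖ * (D₀ * εn * M) := this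
    _ = (C₀ * μhat one + D₀ * M * ‖μhat‖) * εn := by ring
end

section
/- Let (Ω,μ) and (Ω',ν) be measure spaces and let J : L¹(μ) → [0,∞] be strongly lower semicontinuous with strongly sequentially compact nonempty sublevel sets {u : J(u) ≤ C}. Let A, A^l_n, A^u_n : L¹(μ) → L^∞(ν) be continuous linear operators with A^l_n u ≤ A u ≤ A^u_n u for all u ≥ 0 and ‖A^u_n − A^l_n‖ → 0 in operator norm; let f, f^l_n, f^u_n ∈ L^∞(ν) with f^l_n ≤ f ≤ f^u_n and ‖f^u_n − f^l_n‖_∞ → 0. Let ū ∈ L¹(μ) satisfy ū ≥ 0, Aū = f, J(ū) < ∞, and J(ū) ≤ J(u) for every u ≥ 0 with Au = f (a J-minimising solution). Then for every n the problem min{J(u) : u ∈ L¹(μ), u ≥ 0, A^l_n u ≤ f^u_n, A^u_n u ≥ f^l_n} has a minimiser u_n; J(u_n) ≤ J(ū) for all n; and there is a subsequence of (u_n) converging strongly in L¹(μ) to some u* with u* ≥ 0, Au* = f and J(u*) = J(ū), and along this subsequence J(u_n) → J(ū). -/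
open MeasureTheory Filter Topology
open scoped ENNReal

theorem aux_exists_min {X : Type*} [TopologicalSpace X]
    (J : X → ℝ≥0∞)
    (hlsc : ∀ (u : X) (v : ℕ → X), Tendsto v atTop (𝓝 u) →
      J u ≤ liminf (fun n => J (v n)) atTop)
    (hcomp : ∀ C : ℝ≥0∞, C ≠ ⊤ → ({u : X | J u ≤ C}).Nonempty →
      IsSeqCompact {u : X | J u ≤ C})
    (S : Set X) (hS : IsSeqClosed S) (u0 : X) (hu0 : u0 ∈ S) (hJ0 : J u0 < ⊤) :
    ∃ u ∈ S, ∀ w ∈ S, J u ≤ J w := by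
  haveI : Nonempty S := ⟨⟨u0, hu0⟩⟩
  set m : ℝ≥0∞ := ⨅ w : S, J (w : X) with hm
  have hmle : m ≤ J u0 := iInf_le _ (⟨u0, hu0⟩ : S)
  have hmne : m ≠ ⊤ := (hmle.trans_lt hJ0).ne
  have hsel : ∀ k : ℕ, ∃ w : S, J (w : X) < m + ((k : ℝ≥0∞) + 1)⁻¹ := by
    intro k
    have hlt : m < m + ((k : ℝ≥0∞) + 1)⁻¹ :=
      ENNReal.lt_add_right hmne (ENNReal.inv_ne_zero.mpr (by simp))
    exact iInf_lt_iff.mp hlt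
  choose v hv using hsel
  set C := J u0 + 1 with hC
  have hvC : ∀ k, J (v k : X) ≤ C := by
    intro k
    refine (hv k).le.trans (add_le_add hmle ?_)
    exact ENNReal.inv_le_one.mpr le_add_self
  have hCne : C ≠ ⊤ := by
    simp [hC, ENNReal.add_eq_top, hJ0.ne]
  have hCnonempty : ({u : X | J u ≤ C}).Nonempty := ⟨u0, show J u0 ≤ C from le_self_add⟩
  obtain ⟨x, hxC, φ, hφ, htend⟩ :=
    hcomp C hCne hCnonempty (fun k => hvC k)
  have hxS : x ∈ S := hS (fun k => (v (φ k)).2) htend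
  have hφtop : Tendsto (fun k => φ k + 1) atTop atTop :=
    tendsto_atTop_mono (fun k => Nat.le_succ _) hφ.tendsto_atTop
  have h0 : Tendsto (fun k => ((φ k : ℝ≥0∞) + 1)⁻¹) atTop (𝓝 0) := by
    have := ENNReal.tendsto_inv_nat_nhds_zero.comp hφtop
    exact this.congr (fun k => by simp [Function.comp])
  have ht : Tendsto (fun k => m + ((φ k : ℝ≥0∞) + 1)⁻¹) atTop (𝓝 m) := by
    simpa using tendsto_const_nhds.add h0
  have hJx : J x ≤ m := by
    refine (hlsc x (fun k => (v (φ k) : X)) htend).trans ?_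
    calc liminf (fun k => J (v (φ k) : X)) atTop
        ≤ liminf (fun k => m + ((φ k : ℝ≥0∞) + 1)⁻¹) atTop :=
          liminf_le_liminf (Eventually.of_forall fun k => (hv (φ k)).le)
      _ = m := ht.liminf_eq
  exact ⟨x, hxS, fun w hw => hJx.trans (iInf_le _ (⟨w, hw⟩ : S))⟩


set_option maxHeartbeats 1000000 in
/-- Convergence of the primal solutions: if `J` is strongly (sequentially)
lower semicontinuous with strongly sequentially compact sublevel sets, the
operator and data bounds converge, and `ū` is a `J`-minimising solution of
`Au = f`, then each perturbed problem has a minimiser, any sequence of such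
minimisers satisfies `J(u_n) ≤ J(ū)` and has a subsequence converging strongly
in `L¹(μ)` to a `J`-minimising solution, with convergence of the values of `J`. -/
theorem convergence_of_primal_minimisers
    {Ω Ω' : Type*} [MeasurableSpace Ω] [MeasurableSpace Ω']
    (μ : Measure Ω) (ν : Measure Ω')
    (J : Lp ℝ 1 μ → ℝ≥0∞)
    (hlsc : ∀ (u : Lp ℝ 1 μ) (v : ℕ → Lp ℝ 1 μ), Tendsto v atTop (𝓝 u) →
      J u ≤ Filter.liminf (fun n => J (v n)) atTop)
    (hcomp : ∀ C : ℝ≥0∞, C ≠ ⊤ → ({u : Lp ℝ 1 μ | J u ≤ C} : Set (Lp ℝ 1 μ)).Nonempty →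
      IsSeqCompact {u : Lp ℝ 1 μ | J u ≤ C})
    (A : Lp ℝ 1 μ →L[ℝ] Lp ℝ ⊤ ν)
    (Aln Aun : ℕ → (Lp ℝ 1 μ →L[ℝ] Lp ℝ ⊤ ν))
    (hAl : ∀ n, ∀ u : Lp ℝ 1 μ, 0 ≤ u → Aln n u ≤ A u)
    (hAu : ∀ n, ∀ u : Lp ℝ 1 μ, 0 ≤ u → A u ≤ Aun n u)
    (hAconv : Tendsto (fun n => ‖Aun n - Aln n‖) atTop (𝓝 0))
    (f : Lp ℝ ⊤ ν) (fln fun' : ℕ → Lp ℝ ⊤ ν)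
    (hfl : ∀ n, fln n ≤ f) (hfu : ∀ n, f ≤ fun' n)
    (hfconv : Tendsto (fun n => ‖fun' n - fln n‖) atTop (𝓝 0))
    (ubar : Lp ℝ 1 μ) (hubar : 0 ≤ ubar) (hAubar : A ubar = f)
    (hJubar : J ubar < ⊤)
    (hmin : ∀ u : Lp ℝ 1 μ, 0 ≤ u → A u = f → J ubar ≤ J u) :
    (∀ n, ∃ un : Lp ℝ 1 μ,
      (0 ≤ un ∧ Aln n un ≤ fun' n ∧ fln n ≤ Aun n un) ∧
      ∀ w : Lp ℝ 1 μ, 0 ≤ w → Aln n w ≤ fun' n → fln n ≤ Aun n w → J un ≤ J w) ∧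
    (∀ u : ℕ → Lp ℝ 1 μ,
      (∀ n, (0 ≤ u n ∧ Aln n (u n) ≤ fun' n ∧ fln n ≤ Aun n (u n)) ∧
        ∀ w : Lp ℝ 1 μ, 0 ≤ w → Aln n w ≤ fun' n → fln n ≤ Aun n w → J (u n) ≤ J w) →
      (∀ n, J (u n) ≤ J ubar) ∧
      ∃ φ : ℕ → ℕ, StrictMono φ ∧ ∃ ustar : Lp ℝ 1 μ,
        Tendsto (fun k => u (φ k)) atTop (𝓝 ustar) ∧
        0 ≤ ustar ∧ A ustar = f ∧ J ustar = J ubar ∧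
        Tendsto (fun k => J (u (φ k))) atTop (𝓝 (J ubar))) := by
  -- feasibility of ubar for each perturbed problem
  have hfeas : ∀ n, 0 ≤ ubar ∧ Aln n ubar ≤ fun' n ∧ fln n ≤ Aun n ubar := by
    intro n
    refine ⟨hubar, ?_, ?_⟩
    · exact (hAl n ubar hubar).trans (by rw [hAubar]; exact hfu n)
    · exact (hfl n).trans (by rw [← hAubar]; exact hAu n ubar hubar)
  constructor
  · -- existence of minimisers
    intro n
    set S : Set (Lp ℝ 1 μ) :=
      {w | 0 ≤ w ∧ Aln n w ≤ fun' n ∧ fln n ≤ Aun n w} with hSdef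
    have hSclosed : IsSeqClosed S := by
      have h1 : IsClosed {w : Lp ℝ 1 μ | 0 ≤ w} :=
        isClosed_le continuous_const continuous_id
      have h2 : IsClosed {w : Lp ℝ 1 μ | Aln n w ≤ fun' n} :=
        isClosed_le (Aln n).continuous continuous_const
      have h3 : IsClosed {w : Lp ℝ 1 μ | fln n ≤ Aun n w} :=
        isClosed_le continuous_const (Aun n).continuous
      have : IsClosed S := by
        have : S = {w : Lp ℝ 1 μ | 0 ≤ w} ∩
            ({w : Lp ℝ 1 μ | Aln n w ≤ fun' n} ∩ {w : Lp ℝ 1 μ | fln n ≤ Aun n w}) := by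
          ext w; simp [hSdef, Set.mem_setOf_eq, and_assoc]
        rw [this]; exact h1.inter (h2.inter h3)
      exact this.isSeqClosed
    obtain ⟨un, hunS, hunmin⟩ :=
      aux_exists_min J hlsc hcomp S hSclosed ubar (hfeas n) hJubar
    exact ⟨un, hunS, fun w hw1 hw2 hw3 => hunmin w ⟨hw1, hw2, hw3⟩⟩
  · -- convergence
    intro u hu
    have hle : ∀ n, J (u n) ≤ J ubar := fun n =>
      (hu n).2 ubar hubar (hfeas n).2.1 (hfeas n).2.2
    refine ⟨hle, ?_⟩
    have hmemC : ∀ n, u n ∈ {w : Lp ℝ 1 μ | J w ≤ J ubar} := hle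
    obtain ⟨ustar, hustarC, φ, hφ, htend⟩ :=
      hcomp (J ubar) hJubar.ne ⟨ubar, show J ubar ≤ J ubar from le_rfl⟩ hmemC
    have htend' : Tendsto (fun k => u (φ k)) atTop (𝓝 ustar) := htend
    have hpos : ∀ n, 0 ≤ u n := fun n => (hu n).1.1
    have hustarpos : 0 ≤ ustar :=
      le_of_tendsto_of_tendsto' tendsto_const_nhds htend' (fun k => hpos (φ k))
    -- A ustar = f
    have hφtop : Tendsto φ atTop atTop := hφ.tendsto_atTop
    have hbound : ∀ n, ‖A (u n) - f‖ ≤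
        ‖fun' n - fln n‖ + ‖Aun n - Aln n‖ * ‖u n‖ := by
      intro n
      set v := u n with hv
      have hv0 : 0 ≤ v := hpos n
      have h1 : Aln n v ≤ A v := hAl n v hv0
      have h2 : A v ≤ Aun n v := hAu n v hv0
      have h3 : Aln n v ≤ fun' n := (hu n).1.2.1
      have h4 : fln n ≤ Aun n v := (hu n).1.2.2
      have h5 : fln n ≤ f := hfl n
      have h6 : f ≤ fun' n := hfu n
      set g : Lp ℝ ⊤ ν := (fun' n - fln n) + (Aun n v - Aln n v) with hg
      have hgpos : 0 ≤ g :=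
        add_nonneg (sub_nonneg.mpr (h5.trans h6)) (sub_nonneg.mpr (h1.trans h2))
      have hupper : A v - f ≤ g := by
        calc A v - f ≤ Aun n v - f := sub_le_sub_right h2 f
          _ = (Aun n v - Aln n v) + (Aln n v - f) := by abel
          _ ≤ (Aun n v - Aln n v) + (fun' n - fln n) :=
              add_le_add_right (sub_le_sub h3 h5) _
          _ = g := by rw [hg]; abel
      have hlower : -g ≤ A v - f := by
        calc -g = (fln n - fun' n) + (Aln n v - Aun n v) := by rw [hg]; abel
          _ ≤ (Aun n v - fun' n) + (Aln n v - Aun n v) :=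
              add_le_add_left (sub_le_sub_right h4 _) _
          _ = Aln n v - fun' n := by abel
          _ ≤ A v - f := sub_le_sub h1 h6
      have habs : |A v - f| ≤ |g| := by
        rw [abs_of_nonneg hgpos]
        exact abs_le'.mpr ⟨hupper, neg_le.mpr hlower⟩
      have hnorm : ‖A v - f‖ ≤ ‖g‖ := norm_le_norm_of_abs_le_abs habs
      refine hnorm.trans ?_
      refine (norm_add_le _ _).trans ?_
      gcongr
      have : Aun n v - Aln n v = (Aun n - Aln n) v := by
        simp [ContinuousLinearMap.sub_apply]
      rw [this]
      exact (Aun n - Aln n).le_opNorm v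
    have hAtend : Tendsto (fun k => A (u (φ k))) atTop (𝓝 f) := by
      rw [tendsto_iff_norm_sub_tendsto_zero]
      have hb0 : Tendsto (fun k => ‖fun' (φ k) - fln (φ k)‖ +
          ‖Aun (φ k) - Aln (φ k)‖ * ‖u (φ k)‖) atTop (𝓝 0) := by
        have hnormu : Tendsto (fun k => ‖u (φ k)‖) atTop (𝓝 ‖ustar‖) :=
          htend'.norm
        have := (hfconv.comp hφtop).add ((hAconv.comp hφtop).mul hnormu)
        simpa [Function.comp] using this
      exact squeeze_zero (fun k => norm_nonneg _) (fun k => hbound (φ k)) hb0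
    have hAtend2 : Tendsto (fun k => A (u (φ k))) atTop (𝓝 (A ustar)) :=
      (A.continuous.tendsto ustar).comp htend'
    have hAustar : A ustar = f := tendsto_nhds_unique hAtend2 hAtend
    have hJeq : J ustar = J ubar :=
      le_antisymm hustarC (hmin ustar hustarpos hAustar)
    refine ⟨φ, hφ, ustar, htend', hustarpos, hAustar, hJeq, ?_⟩
    refine tendsto_of_le_liminf_of_limsup_le ?_ ?_
    · rw [← hJeq]
      exact hlsc ustar (fun k => u (φ k)) htend'
    · exact limsup_le_of_le (by isBoundedDefault)
        (Eventually.of_forall fun k => hle (φ k))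
end

section
/- Let (Ω,μ) be a measure space and (Ω',ν) a finite measure space, let A : L¹(μ) → L^∞(ν) be a continuous linear operator satisfying, for some c > 0, ∫ Av dν ≥ c·∫ v dμ for every v ∈ L¹(μ) with v ≥ 0, and let A^l : L¹(μ) → L^∞(ν) be a continuous linear operator with ‖A − A^l‖ ≤ η in the L¹(μ) → L^∞(ν) operator norm, where η·ν(Ω') < c. Then every u ∈ L¹(μ) with u ≥ 0 and A^l u ≤ f^u for some f^u ∈ L^∞(ν) satisfies ‖u‖₁ ≤ (∫ f^u dν)/(c − η·ν(Ω')). In particular, all elements of the feasible set {u ≥ 0 : A^l u ≤ f^u} are uniformly bounded in L¹(μ). -/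
open MeasureTheory
open scoped ENNReal

private lemma Linfty_ae_norm_le {Ω' : Type*} [MeasurableSpace Ω'] {ν : Measure Ω'}
    (g : Lp ℝ ⊤ ν) : ∀ᵐ y ∂ν, ‖g y‖ ≤ ‖g‖ := by
  filter_upwards [MeasureTheory.ae_le_eLpNormEssSup (f := (g : Ω' → ℝ)) (μ := ν)] with y hy
  rw [Lp.norm_def, ← eLpNorm_exponent_top (f := (g : Ω' → ℝ))] at *
  calc ‖g y‖ = ((‖g y‖₊ : ℝ≥0∞)).toReal := by simp
    _ ≤ (eLpNorm (g : Ω' → ℝ) ⊤ ν).toReal := ENNReal.toReal_mono (Lp.eLpNorm_ne_top g) hy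

private lemma Linfty_integrable {Ω' : Type*} [MeasurableSpace Ω'] {ν : Measure Ω'}
    [IsFiniteMeasure ν] (g : Lp ℝ ⊤ ν) : Integrable (g : Ω' → ℝ) ν :=
  (Lp.memLp g).integrable le_top

/-- If `A : L¹(μ) → L^∞(ν)` (with `ν` finite) satisfies `∫ Av dν ≥ c·∫ v dμ`
for all `v ≥ 0`, and `A^l` is a perturbed operator with `‖A - A^l‖ ≤ η` where
`η·ν(Ω') < c`, then every `u ≥ 0` with `A^l u ≤ f^u` satisfies
`‖u‖₁ ≤ (∫ f^u dν)/(c - η·ν(Ω'))`; in particular the feasible set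
`{u ≥ 0 : A^l u ≤ f^u}` is uniformly bounded in `L¹(μ)`. -/
theorem feasible_set_bounded_perturbed_operator
    {Ω Ω' : Type*} [MeasurableSpace Ω] [MeasurableSpace Ω']
    (μ : Measure Ω) (ν : Measure Ω') [IsFiniteMeasure ν]
    (A Al : Lp ℝ 1 μ →L[ℝ] Lp ℝ ⊤ ν)
    (c : ℝ) (hc : 0 < c)
    (hA : ∀ v : Lp ℝ 1 μ, 0 ≤ v → c * ∫ x, v x ∂μ ≤ ∫ y, (A v) y ∂ν)
    (η : ℝ) (hAl : ‖A - Al‖ ≤ η)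
    (hη : η * (ν Set.univ).toReal < c) :
    ∀ fu : Lp ℝ ⊤ ν,
      (∀ u : Lp ℝ 1 μ, 0 ≤ u → Al u ≤ fu →
        ‖u‖ ≤ (∫ y, fu y ∂ν) / (c - η * (ν Set.univ).toReal)) ∧
      Bornology.IsBounded {u : Lp ℝ 1 μ | 0 ≤ u ∧ Al u ≤ fu} := by
  intro fu
  set t : ℝ := (ν Set.univ).toReal with ht
  have htpos : 0 < c - η * t := by linarith
  have key : ∀ u : Lp ℝ 1 μ, 0 ≤ u → Al u ≤ fu →
      ‖u‖ ≤ (∫ y, fu y ∂ν) / (c - η * t) := by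
    intro u hu hle
    -- ‖u‖ = ∫ u
    have hu_ae : 0 ≤ᵐ[μ] (u : Ω → ℝ) := (Lp.coeFn_nonneg u).2 hu
    have hnorm : ‖u‖ = ∫ x, u x ∂μ := by
      rw [L1.norm_eq_integral_norm]
      refine integral_congr_ae ?_
      filter_upwards [hu_ae] with x hx
      exact Real.norm_of_nonneg hx
    -- decompose A u
    have hdecomp : (A u : Ω' → ℝ) =ᵐ[ν] fun y => (Al u) y + ((A - Al) u) y := by
      have h1 : ((A - Al) u : Ω' → ℝ) =ᵐ[ν] fun y => (A u) y - (Al u) y := by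
        rw [ContinuousLinearMap.sub_apply]
        exact Lp.coeFn_sub (A u) (Al u)
      filter_upwards [h1] with y hy
      simp only [hy]; ring
    have hint : ∫ y, (A u) y ∂ν = (∫ y, (Al u) y ∂ν) + ∫ y, ((A - Al) u) y ∂ν := by
      rw [integral_congr_ae hdecomp,
        integral_add (Linfty_integrable (Al u)) (Linfty_integrable ((A - Al) u))]
    -- ∫ Al u ≤ ∫ fu
    have h3 : ∫ y, (Al u) y ∂ν ≤ ∫ y, fu y ∂ν :=
      integral_mono_ae (Linfty_integrable (Al u)) (Linfty_integrable fu)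
        ((Lp.coeFn_le _ _).2 hle)
    -- ∫ (A - Al) u ≤ η * ‖u‖ * t
    have hη0 : 0 ≤ η := le_trans (norm_nonneg _) hAl
    have h4 : ∫ y, ((A - Al) u) y ∂ν ≤ η * ‖u‖ * t := by
      have hb : ∀ᵐ y ∂ν, ‖((A - Al) u) y‖ ≤ η * ‖u‖ := by
        filter_upwards [Linfty_ae_norm_le ((A - Al) u)] with y hy
        refine hy.trans ?_
        calc ‖(A - Al) u‖ ≤ ‖A - Al‖ * ‖u‖ := (A - Al).le_opNorm u
          _ ≤ η * ‖u‖ := mul_le_mul_of_nonneg_right hAl (norm_nonneg u)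
      calc ∫ y, ((A - Al) u) y ∂ν ≤ ‖∫ y, ((A - Al) u) y ∂ν‖ := le_abs_self _
        _ ≤ (η * ‖u‖) * t := norm_integral_le_of_norm_le_const hb
        _ = η * ‖u‖ * t := by ring
    have hmain : c * ‖u‖ ≤ (∫ y, fu y ∂ν) + η * ‖u‖ * t := by
      calc c * ‖u‖ = c * ∫ x, u x ∂μ := by rw [hnorm]
        _ ≤ ∫ y, (A u) y ∂ν := hA u hu
        _ = (∫ y, (Al u) y ∂ν) + ∫ y, ((A - Al) u) y ∂ν := hint
        _ ≤ (∫ y, fu y ∂ν) + η * ‖u‖ * t := add_le_add h3 h4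
    rw [le_div_iff₀ htpos]
    nlinarith [norm_nonneg u]
  refine ⟨key, ?_⟩
  have : {u : Lp ℝ 1 μ | 0 ≤ u ∧ Al u ≤ fu} ⊆
      Metric.closedBall 0 ((∫ y, fu y ∂ν) / (c - η * t)) := by
    intro u hu
    simpa [Metric.mem_closedBall, dist_zero_right] using key u hu.1 hu.2
  exact (Metric.isBounded_closedBall).subset this
end

section
/- Let (Ω,μ) be a σ-finite measure space, let u ∈ L¹(μ), and let r ∈ L^∞(μ) satisfy ⟨r,v⟩ ≤ ‖v‖₁ for all v ∈ L¹(μ), ⟨r,u⟩ = ‖u‖₁, and additionally |r| < 1 μ-a.e. on the set {u = 0}. Then for every v ∈ L¹(μ): ⟨r,v⟩ = ‖v‖₁ if and only if v = 0 μ-a.e. on {u = 0} and u·v ≥ 0 μ-a.e. (That is, the model manifold of the L¹ norm at u consists exactly of the functions supported on the support of u whose sign agrees with that of u wherever they are nonzero.) -/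
open MeasureTheory
open scoped ENNReal

lemma aux_sign {a b c : ℝ} (h1 : c * a = |a|) (h2 : c * b = |b|) (ha : a ≠ 0) :
    0 ≤ a * b := by
  by_contra h
  push_neg at h
  have habs : |a * b| = -(a * b) := abs_of_neg h
  have hmul : c * a * (c * b) = |a * b| := by rw [h1, h2, abs_mul]
  nlinarith [sq_nonneg c]

lemma aux_eq {a b c : ℝ} (h1 : c * a = |a|) (ha : a ≠ 0) (h2 : 0 ≤ a * b) :
    c * b = |b| := by
  rcases ha.lt_or_gt with hneg | hpos
  · rw [abs_of_neg hneg] at h1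
    have hc : c = -1 := mul_right_cancel₀ ha (by rw [h1]; ring)
    have hb0 : b ≤ 0 := by nlinarith
    rw [hc, abs_of_nonpos hb0]; ring
  · rw [abs_of_pos hpos] at h1
    have hc : c = 1 := mul_right_cancel₀ ha (by rw [h1]; ring)
    have hb0 : 0 ≤ b := by nlinarith
    rw [hc, abs_of_nonneg hb0]; ring

/-- Model manifold of the `L¹` norm: if `r` is a subgradient of the `L¹` norm
at `u` with `|r| < 1` a.e. on `{u = 0}`, then for every `v ∈ L¹(μ)` the Bregman
distance `‖v‖₁ - ⟨r,v⟩` vanishes if and only if `v = 0` a.e. on `{u = 0}` and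
`u·v ≥ 0` a.e. -/
theorem model_manifold_of_l1_norm
    {Ω : Type*} [MeasurableSpace Ω] (μ : Measure Ω) [SigmaFinite μ]
    (u : Lp ℝ 1 μ) (r : Lp ℝ ⊤ μ)
    (hr_le : ∀ v : Lp ℝ 1 μ, ∫ x, r x * v x ∂μ ≤ ‖v‖)
    (hr_eq : ∫ x, r x * u x ∂μ = ‖u‖)
    (hr_lt : ∀ᵐ x ∂μ, u x = 0 → |r x| < 1) :
    ∀ v : Lp ℝ 1 μ,
      (∫ x, r x * v x ∂μ = ‖v‖) ↔
      ((∀ᵐ x ∂μ, u x = 0 → v x = 0) ∧ (∀ᵐ x ∂μ, 0 ≤ u x * v x)) := by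
  -- r is a.e. bounded by its L∞ norm
  have hrC : ∀ᵐ x ∂μ, ‖(r : Ω → ℝ) x‖ ≤ ‖r‖ := by
    have h1 : ∀ᵐ x ∂μ, (‖(r : Ω → ℝ) x‖₊ : ℝ≥0∞) ≤ eLpNormEssSup (r : Ω → ℝ) μ :=
      ae_le_eLpNormEssSup
    have h2 : eLpNormEssSup (r : Ω → ℝ) μ = (‖r‖₊ : ℝ≥0∞) := by
      rw [← eLpNorm_exponent_top, Lp.nnnorm_def,
        ENNReal.coe_toNNReal (Lp.eLpNorm_ne_top r)]
    filter_upwards [h1] with x hx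
    rw [h2, ENNReal.coe_le_coe] at hx
    exact hx
  -- integrability of r on finite measure sets
  have hr_int : ∀ s : Set Ω, MeasurableSet s → μ s < ∞ →
      IntegrableOn (fun x => (r : Ω → ℝ) x) s μ := by
    intro s hs hμs
    have : IsFiniteMeasure (μ.restrict s) :=
      ⟨by rwa [Measure.restrict_apply_univ]⟩
    exact Integrable.mono' (integrable_const ‖r‖)
      (Lp.aestronglyMeasurable r).restrict (ae_restrict_of_ae hrC)
  -- |r| ≤ 1 a.e.
  have hb : ∀ᵐ x ∂μ, |(r : Ω → ℝ) x| ≤ 1 := by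
    have key : ∀ c : ℝ, ‖c‖ = 1 → ∀ᵐ x ∂μ, 0 ≤ 1 - c * (r : Ω → ℝ) x := by
      intro c hc
      apply ae_nonneg_of_forall_setIntegral_nonneg_of_sigmaFinite
      · intro s hs hμs
        exact (integrableOn_const hμs.ne).sub ((hr_int s hs hμs).const_mul c)
      · intro s hs hμs
        set w : Lp ℝ 1 μ := indicatorConstLp 1 hs hμs.ne c with hw_def
        have hw : (w : Ω → ℝ) =ᵐ[μ] s.indicator fun _ => c := indicatorConstLp_coeFn
        have hnorm : ‖w‖ = (μ s).toReal := by
          rw [hw_def, norm_indicatorConstLp one_ne_zero ENNReal.one_ne_top]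
          simp [hc, Measure.real]
        have hint : ∫ x, (r : Ω → ℝ) x * w x ∂μ = ∫ x in s, c * (r : Ω → ℝ) x ∂μ := by
          rw [← integral_indicator hs]
          apply integral_congr_ae
          filter_upwards [hw] with x hx
          rw [hx]
          by_cases hxs : x ∈ s <;> simp [hxs, mul_comm]
        have hle := hr_le w
        rw [hint, hnorm] at hle
        have : IsFiniteMeasure (μ.restrict s) :=
          ⟨by rwa [Measure.restrict_apply_univ]⟩
        rw [integral_sub (integrableOn_const (C := (1 : ℝ)) hμs.ne)
          ((hr_int s hs hμs).const_mul c)]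
        have h1 : ∫ _ in s, (1 : ℝ) ∂μ = (μ s).toReal := by
          simp [setIntegral_const, Measure.real]
        linarith [h1 ▸ le_refl (∫ _ in s, (1 : ℝ) ∂μ), hle, h1]
    have k1 := key 1 (by norm_num)
    have k2 := key (-1) (by norm_num)
    filter_upwards [k1, k2] with x h1 h2
    rw [abs_le]; constructor <;> nlinarith
  have hrb1 : ∀ᵐ x ∂μ, ‖(r : Ω → ℝ) x‖ ≤ 1 := by
    filter_upwards [hb] with x hx; rwa [Real.norm_eq_abs]
  have hmul_int : ∀ v : Lp ℝ 1 μ, Integrable (fun x => (r : Ω → ℝ) x * v x) μ :=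
    fun v => (L1.integrable_coeFn v).bdd_mul (Lp.aestronglyMeasurable r) hrb1
  -- the equality case forces r·v = |v| a.e.
  have key : ∀ v : Lp ℝ 1 μ, (∫ x, r x * v x ∂μ = ‖v‖) →
      ∀ᵐ x ∂μ, (r : Ω → ℝ) x * v x = |v x| := by
    intro v h
    have hnn : 0 ≤ᵐ[μ] fun x => |v x| - (r : Ω → ℝ) x * v x := by
      filter_upwards [hb] with x hx
      have h1 : (r : Ω → ℝ) x * v x ≤ |(r : Ω → ℝ) x| * |v x| :=
        le_trans (le_abs_self _) (abs_mul _ _).le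
      simp only [Pi.zero_apply]
      nlinarith [abs_nonneg ((v : Ω → ℝ) x)]
    have hint : Integrable (fun x => |v x| - (r : Ω → ℝ) x * v x) μ :=
      (L1.integrable_coeFn v).abs.sub (hmul_int v)
    have hzero : ∫ x, (|v x| - (r : Ω → ℝ) x * v x) ∂μ = 0 := by
      rw [integral_sub (L1.integrable_coeFn v).abs (hmul_int v), h,
        L1.norm_eq_integral_norm]
      simp [Real.norm_eq_abs]
    have h0 := (integral_eq_zero_iff_of_nonneg_ae hnn hint).mp hzero
    filter_upwards [h0] with x hx
    have : |v x| - (r : Ω → ℝ) x * v x = 0 := hx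
    linarith
  have hru : ∀ᵐ x ∂μ, (r : Ω → ℝ) x * u x = |u x| := key u hr_eq
  intro v
  constructor
  · intro h
    have hrv := key v h
    constructor
    · filter_upwards [hrv, hr_lt] with x h1 h2 hu0
      have hlt := h2 hu0
      by_contra hbne
      have hpos : 0 < |(v : Ω → ℝ) x| := abs_pos.2 hbne
      have habs : |(r : Ω → ℝ) x * v x| = |(r : Ω → ℝ) x| * |v x| := abs_mul _ _
      rw [h1, abs_abs] at habs
      nlinarith
    · filter_upwards [hrv, hru] with x h1 h2
      by_cases hu : (u : Ω → ℝ) x = 0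
      · simp [hu]
      · exact aux_sign h2 h1 hu
  · rintro ⟨h0, hs⟩
    have hrv : ∀ᵐ x ∂μ, (r : Ω → ℝ) x * v x = |v x| := by
      filter_upwards [h0, hs, hru] with x h0x hsx hrux
      by_cases hu : (u : Ω → ℝ) x = 0
      · simp [h0x hu]
      · exact aux_eq hrux hu hsx
    rw [integral_congr_ae hrv, L1.norm_eq_integral_norm]
    simp [Real.norm_eq_abs]
end

section
/- Let (Ω,μ) and (Ω',ν) be measure spaces, let J : L¹(μ) → [0,∞] be absolutely one-homogeneous, let B_n : L¹(μ) → L^∞(ν) be a continuous linear operator and φ_n ∈ L^∞(ν). Let u_n, ū ∈ L¹(μ) with u_n ≥ 0, ū ≥ 0, B_n ū ≤ φ_n; let λ_n ∈ L^∞(μ) with λ_n ≥ 0 and ⟨λ_n, u_n⟩ = 0; and let μ_n be a positive continuous linear functional on L^∞(ν) with μ_n(B_n u_n) = μ_n(φ_n). Assume the subgradient conditions ⟨λ_n, v⟩ − μ_n(B_n v) ≤ J(v) for all v ∈ L¹(μ) and ⟨λ_n, u_n⟩ − μ_n(B_n u_n) = J(u_n). Writing p_n(v) := ⟨λ_n,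 v⟩ − μ_n(B_n v), the following hold: p_n(u_n) = −μ_n(φ_n) = J(u_n), p_n(ū) ≥ p_n(u_n), and 0 ≤ J(ū) − p_n(ū) ≤ J(ū) − J(u_n). In particular, if J(u_n) → J(ū), then p_n(ū) → J(ū). -/
open MeasureTheory Filter Topology
open scoped ENNReal

/-- For the optimal primal/dual pairs of the perturbed problems, writing
`p_n(v) := ⟨λ_n, v⟩ - μ_n(B_n v)`, one has `p_n(u_n) = -μ_n(φ_n) = J(u_n)`,
`p_n(ū) ≥ p_n(u_n)` and `0 ≤ J(ū) - p_n(ū) ≤ J(ū) - J(u_n)`; in particular, if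
`J(u_n) → J(ū)` then `p_n(ū) → J(ū)`. -/
theorem pairing_with_subgradient_converges
    {Ω Ω' : Type*} [MeasurableSpace Ω] [MeasurableSpace Ω']
    (μ : Measure Ω) (ν : Measure Ω')
    (J : Lp ℝ 1 μ → ℝ≥0∞)
    (hzero : J 0 = 0)
    (hhom : ∀ (s : ℝ) (u : Lp ℝ 1 μ), J (s • u) = ENNReal.ofReal |s| * J u)
    (Bn : ℕ → (Lp ℝ 1 μ →L[ℝ] Lp ℝ ⊤ ν)) (φn : ℕ → Lp ℝ ⊤ ν)
    (un : ℕ → Lp ℝ 1 μ) (ubar : Lp ℝ 1 μ)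
    (hun : ∀ n, 0 ≤ un n) (hubar : 0 ≤ ubar)
    (hfeasb : ∀ n, Bn n ubar ≤ φn n)
    (lamn : ℕ → Lp ℝ ⊤ μ) (hlamn : ∀ n, 0 ≤ lamn n)
    (hcompl1 : ∀ n, ∫ x, lamn n x * un n x ∂μ = 0)
    (μn : ℕ → (Lp ℝ ⊤ ν →L[ℝ] ℝ))
    (hμn : ∀ n, ∀ ψ : Lp ℝ ⊤ ν, 0 ≤ ψ → 0 ≤ μn n ψ)
    (hcompl2 : ∀ n, μn n (Bn n (un n)) = μn n (φn n))
    (hsubgrad : ∀ n, ∀ v : Lp ℝ 1 μ,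
      ((∫ x, lamn n x * v x ∂μ - μn n (Bn n v) : ℝ) : EReal) ≤ (J v : EReal))
    (hsubgrad_eq : ∀ n,
      ((∫ x, lamn n x * un n x ∂μ - μn n (Bn n (un n)) : ℝ) : EReal)
        = (J (un n) : EReal)) :
    (∀ n,
      (∫ x, lamn n x * un n x ∂μ - μn n (Bn n (un n)) = -(μn n (φn n))) ∧
      ((J (un n) : EReal)
        = ((∫ x, lamn n x * un n x ∂μ - μn n (Bn n (un n)) : ℝ) : EReal)) ∧
      (∫ x, lamn n x * un n x ∂μ - μn n (Bn n (un n))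
        ≤ ∫ x, lamn n x * ubar x ∂μ - μn n (Bn n ubar)) ∧
      ((0 : EReal) ≤ (J ubar : EReal)
          - ((∫ x, lamn n x * ubar x ∂μ - μn n (Bn n ubar) : ℝ) : EReal)) ∧
      ((J ubar : EReal)
          - ((∫ x, lamn n x * ubar x ∂μ - μn n (Bn n ubar) : ℝ) : EReal)
        ≤ (J ubar : EReal) - (J (un n) : EReal))) ∧
    (Tendsto (fun n => (J (un n) : EReal)) atTop (𝓝 (J ubar : EReal)) →
      Tendsto
        (fun n => ((∫ x, lamn n x * ubar x ∂μ - μn n (Bn n ubar) : ℝ) : EReal))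
        atTop (𝓝 (J ubar : EReal))) := by
  -- notation: p n v := ∫ λ_n v - μ_n (B_n v)
  have hpun : ∀ n, ∫ x, lamn n x * un n x ∂μ - μn n (Bn n (un n))
      = -(μn n (φn n)) := by
    intro n
    rw [hcompl1 n, hcompl2 n]; ring
  have hint_nonneg : ∀ n, 0 ≤ ∫ x, lamn n x * ubar x ∂μ := by
    intro n
    refine integral_nonneg_of_ae ?_
    have h1 : (0 : Ω → ℝ) ≤ᵐ[μ] lamn n := (Lp.coeFn_nonneg _).2 (hlamn n)
    have h2 : (0 : Ω → ℝ) ≤ᵐ[μ] ubar := (Lp.coeFn_nonneg _).2 hubar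
    filter_upwards [h1, h2] with x hx1 hx2
    exact mul_nonneg hx1 hx2
  have hμle : ∀ n, μn n (Bn n ubar) ≤ μn n (φn n) := by
    intro n
    have h0 : 0 ≤ φn n - Bn n ubar := sub_nonneg.2 (hfeasb n)
    have := hμn n _ h0
    rw [map_sub] at this
    linarith
  have hmono : ∀ n, ∫ x, lamn n x * un n x ∂μ - μn n (Bn n (un n))
      ≤ ∫ x, lamn n x * ubar x ∂μ - μn n (Bn n ubar) := by
    intro n
    rw [hpun n]
    have := hint_nonneg n
    have := hμle n
    linarith
  refine ⟨fun n => ⟨hpun n, (hsubgrad_eq n).symm, hmono n, ?_, ?_⟩, ?_⟩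
  · -- 0 ≤ J ubar - p n ubar
    have h := hsubgrad n ubar
    calc (0 : EReal)
        = ((∫ x, lamn n x * ubar x ∂μ - μn n (Bn n ubar) : ℝ) : EReal)
          - ((∫ x, lamn n x * ubar x ∂μ - μn n (Bn n ubar) : ℝ) : EReal) := by
            rw [← EReal.coe_sub]; norm_num
      _ ≤ _ := EReal.sub_le_sub h le_rfl
  · -- J ubar - p n ubar ≤ J ubar - J (un n)
    refine EReal.sub_le_sub le_rfl ?_
    rw [← hsubgrad_eq n]
    exact EReal.coe_le_coe_iff.2 (hmono n)
  · intro htend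
    have hlow : ∀ n, (J (un n) : EReal)
        ≤ ((∫ x, lamn n x * ubar x ∂μ - μn n (Bn n ubar) : ℝ) : EReal) := by
      intro n
      rw [← hsubgrad_eq n]
      exact EReal.coe_le_coe_iff.2 (hmono n)
    have hhigh : ∀ n, ((∫ x, lamn n x * ubar x ∂μ - μn n (Bn n ubar) : ℝ) : EReal)
        ≤ (J ubar : EReal) := fun n => hsubgrad n ubar
    exact tendsto_of_tendsto_of_tendsto_of_le_of_le htend tendsto_const_nhds
      hlow hhigh
end
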